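/- Variational cost of a high excursion (from the proof of Lemma 3.1, Step 2): Let V : ℝ → ℝ be continuous with V(s) ≥ 0 for all s, let M ≥ 4, and assume V(u) ≥ V(3M) for all u ≥ 3M. Fix Δ ∈ (0, 2] and define, for continuously differentiable u : ℝ → ℝ, E_Δ(u) = ∫_{−1}^{1} ( (1/2)·(u'(x))² + (Δ²/4)·V(u(x)) ) dx. Let B^bc be the set of continuously differentiable u with u(−1) = u(1) = 3M, and let B₊^bc be the set of u ∈ B^bc for which there exists x₀ ∈ [−1, 1] with u(x₀) ≥ 4M − 1. Then inf_{u ∈ B₊^bc} E_Δ(u) − inf_{u ∈ B^bc} E_Δ(u) ≥ (M − 1)². -/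

import Mathlib

set_option maxHeartbeats 1000000
open MeasureTheory


noncomputable def qf (t : ℝ) : ℝ := (max t 0)^2

lemma qf_nonneg (t : ℝ) : 0 ≤ qf t := sq_nonneg _

lemma qf_pos_den (t : ℝ) : 0 < qf (1 - t) + qf t := by
  rcases le_or_gt t 0 with h | h
  · have h1 : (0:ℝ) < 1 - t := by linarith
    have : qf (1 - t) = (1-t)^2 := by simp [qf, max_eq_left h1.le]
    have h2 : (0:ℝ) < (1-t)^2 := by positivity
    have := qf_nonneg t
    linarith
  · have : qf t = t^2 := by simp [qf, max_eq_left h.le]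
    have h2 : (0:ℝ) < t^2 := by positivity
    have := qf_nonneg (1-t)
    linarith

lemma hasDerivAt_qf (t : ℝ) : HasDerivAt qf (2 * max t 0) t := by
  rcases lt_trichotomy t 0 with h | h | h
  · have he : qf =ᶠ[nhds t] (fun _ => (0:ℝ)) := by
      filter_upwards [Iio_mem_nhds h] with s hs
      have : s < 0 := hs
      simp [qf, max_eq_right this.le]
    have h0 : HasDerivAt (fun _ : ℝ => (0:ℝ)) 0 t := hasDerivAt_const t 0
    have := h0.congr_of_eventuallyEq he
    simpa [max_eq_right h.le] using this
  · subst h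
    have hm : max (0:ℝ) 0 = 0 := by simp
    rw [hm, mul_zero]
    rw [hasDerivAt_iff_isLittleO]
    rw [Asymptotics.isLittleO_iff]
    intro c hc
    filter_upwards [Metric.ball_mem_nhds (0:ℝ) hc] with s hs
    simp only [Metric.mem_ball, Real.dist_eq, sub_zero] at hs
    rw [show qf s - qf 0 - (s - 0) • (0:ℝ) = qf s from by simp [qf], show s - 0 = s from by ring]
    have h1 : qf s ≤ |s| * |s| := by
      rcases le_or_gt s 0 with h' | h'
      · simp only [qf, max_eq_right h']
        have := mul_nonneg (abs_nonneg s) (abs_nonneg s)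
        simpa using this
      · rw [qf, max_eq_left h'.le, abs_of_pos h']; nlinarith
    have h2 : ‖qf s‖ = qf s := by rw [Real.norm_eq_abs, abs_of_nonneg (qf_nonneg s)]
    rw [h2, Real.norm_eq_abs]
    calc qf s ≤ |s| * |s| := h1
      _ ≤ c * |s| := mul_le_mul_of_nonneg_right hs.le (abs_nonneg _)
  · have he : qf =ᶠ[nhds t] (fun s => s^2) := by
      filter_upwards [Ioi_mem_nhds h] with s hs
      have : (0:ℝ) < s := hs
      simp [qf, max_eq_left this.le]
    have h0 : HasDerivAt (fun s : ℝ => s^2) (2*t) t := by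
      simpa using hasDerivAt_pow 2 t
    have := h0.congr_of_eventuallyEq he
    simpa [max_eq_left h.le] using this

lemma continuous_qf : Continuous qf := ((continuous_id.max continuous_const).pow 2)

noncomputable def phi (t : ℝ) : ℝ := qf (1 - t) / (qf (1 - t) + qf t)

noncomputable def phi' (t : ℝ) : ℝ :=
  (-(2 * max (1-t) 0 * max t 0 * (max (1-t) 0 + max t 0))) / (qf (1 - t) + qf t)^2

lemma hasDerivAt_phi (t : ℝ) : HasDerivAt phi (phi' t) t := by
  have h1 : HasDerivAt (fun s : ℝ => qf (1 - s)) (2 * max (1-t) 0 * (-1)) t := by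
    have := (hasDerivAt_qf (1 - t)).comp t ((hasDerivAt_const t (1:ℝ)).sub (hasDerivAt_id t))
    simpa [Function.comp_def] using this
  have h2 : HasDerivAt (fun s : ℝ => qf (1 - s) + qf s) (2 * max (1-t) 0 * (-1) + 2 * max t 0) t :=
    h1.add (hasDerivAt_qf t)
  have h3 := h1.div h2 (ne_of_gt (qf_pos_den t))
  refine h3.congr_deriv ?_
  symm
  have hd := ne_of_gt (qf_pos_den t)
  simp only [phi', qf] at *
  ring

lemma continuous_phi : Continuous phi := by
  apply Continuous.div
  · exact continuous_qf.comp (continuous_const.sub continuous_id)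
  · exact (continuous_qf.comp (continuous_const.sub continuous_id)).add continuous_qf
  · exact fun t => ne_of_gt (qf_pos_den t)

lemma continuous_phi' : Continuous phi' := by
  apply Continuous.div
  · apply Continuous.neg
    apply Continuous.mul
    · apply Continuous.mul
      · exact continuous_const.mul ((continuous_const.sub continuous_id).max continuous_const)
      · exact continuous_id.max continuous_const
    · exact ((continuous_const.sub continuous_id).max continuous_const).add (continuous_id.max continuous_const)
  · exact (((continuous_qf.comp (continuous_const.sub continuous_id)).add continuous_qf).pow 2)
  · exact fun t => pow_ne_zero 2 (ne_of_gt (qf_pos_den t))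

lemma phi_eq_one {t : ℝ} (ht : t ≤ 0) : phi t = 1 := by
  have h1 : qf t = 0 := by simp [qf, max_eq_right ht]
  have h2 : (0:ℝ) < qf (1-t) + qf t := qf_pos_den t
  rw [phi, h1, add_zero]
  rw [h1, add_zero] at h2
  exact div_self (ne_of_gt h2)

lemma phi_eq_zero {t : ℝ} (ht : 1 ≤ t) : phi t = 0 := by
  have h1 : qf (1-t) = 0 := by simp [qf, max_eq_right (by linarith : 1 - t ≤ 0)]
  simp [phi, h1]

lemma phi_mem (t : ℝ) : phi t ∈ Set.Icc (0:ℝ) 1 := by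
  constructor
  · exact div_nonneg (qf_nonneg _) (qf_pos_den t).le
  · rw [phi, div_le_one (qf_pos_den t)]
    have := qf_nonneg t
    linarith

lemma phi'_eq_zero_left {t : ℝ} (ht : t ≤ 0) : phi' t = 0 := by
  have : max t 0 = 0 := max_eq_right ht
  simp [phi', this]

lemma phi'_eq_zero_right {t : ℝ} (ht : 1 ≤ t) : phi' t = 0 := by
  have : max (1-t) 0 = 0 := max_eq_right (by linarith)
  simp [phi', this]

lemma abs_phi'_le (t : ℝ) : |phi' t| ≤ 2 := by
  rcases le_or_gt t 0 with h | h
  · rw [phi'_eq_zero_left h]; norm_num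
  rcases le_or_gt 1 t with h' | h'
  · rw [phi'_eq_zero_right h']; norm_num
  · have hA : max (1-t) 0 = 1 - t := max_eq_left (by linarith)
    have hB : max t 0 = t := max_eq_left h.le
    have hq1 : qf (1-t) = (1-t)^2 := by rw [qf, hA]
    have hq2 : qf t = t^2 := by rw [qf, hB]
    rw [phi', hA, hB, hq1, hq2]
    rw [abs_div]
    have hden : (0:ℝ) < ((1-t)^2 + t^2)^2 := by positivity
    rw [abs_of_nonneg hden.le, div_le_iff₀ hden]
    have hnum : |(-(2 * (1-t) * t * ((1-t) + t)))| = 2 * (1-t) * t := by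
      rw [abs_neg, abs_of_nonneg]
      · ring_nf
      · nlinarith
    rw [hnum]
    nlinarith [sq_nonneg (1 - 2*t), sq_nonneg t, sq_nonneg (1-t)]


lemma ftc_c1 {u : ℝ → ℝ} (hu : ContDiff ℝ 1 u) (p q : ℝ) :
    ∫ x in p..q, deriv u x = u q - u p :=
  intervalIntegral.integral_deriv_eq_sub
    (fun x _ => (hu.differentiable one_ne_zero).differentiableAt)
    (((hu.continuous_deriv le_rfl)).intervalIntegrable p q)

lemma cs_int {f : ℝ → ℝ} (hf : Continuous f) {p q : ℝ} (hpq : p ≤ q) :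
    (∫ x in p..q, f x)^2 ≤ (q - p) * ∫ x in p..q, (f x)^2 := by
  rcases eq_or_lt_of_le hpq with h | h
  · subst h; simp
  set I := ∫ x in p..q, f x with hI
  set J := ∫ x in p..q, (f x)^2 with hJ
  set l := I / (q - p) with hl
  have hqp : (0:ℝ) < q - p := by linarith
  have h0 : 0 ≤ ∫ x in p..q, (f x - l)^2 :=
    intervalIntegral.integral_nonneg hpq (fun x _ => sq_nonneg _)
  have hexp : ∫ x in p..q, (f x - l)^2
      = J - 2*l*I + l^2*(q-p) := by
    have h1 : ∀ x, (f x - l)^2 = (f x)^2 - 2*l*(f x) + l^2 := by intro x; ring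
    rw [intervalIntegral.integral_congr (fun x _ => h1 x)]
    rw [intervalIntegral.integral_add, intervalIntegral.integral_sub]
    · rw [intervalIntegral.integral_const_mul, intervalIntegral.integral_const]
      rw [smul_eq_mul]; ring
    · exact (hf.pow 2).intervalIntegrable p q
    · exact (continuous_const.mul hf).intervalIntegrable p q
    · exact ((hf.pow 2).sub (continuous_const.mul hf)).intervalIntegrable p q
    · exact continuous_const.intervalIntegrable p q
  have key : J - 2*l*I + l^2*(q-p) = J - I^2/(q-p) := by
    rw [hl]; field_simp; ring
  rw [hexp, key] at h0
  have h3 : I^2/(q-p) ≤ J := by linarith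
  have h4 := (div_le_iff₀ hqp).mp h3
  linarith [h4]

/-- Variational cost of a high excursion (from the proof of Lemma 3.1, Step 2): with
`E_Δ(u) = ∫_{−1}^{1} ((1/2) u'² + (Δ²/4) V(u))`, boundary values `3M` at `±1`, and the extra
constraint that `u` reaches `4M − 1` somewhere in `[−1, 1]`, the minimal energy increases by
at least `(M − 1)²`. -/
theorem high_excursion_cost
    (V : ℝ → ℝ) (hVc : Continuous V) (hV0 : ∀ s, 0 ≤ V s)
    (M : ℝ) (hM : 4 ≤ M) (hVM : ∀ u : ℝ, 3*M ≤ u → V (3*M) ≤ V u)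
    (Δ : ℝ) (hΔ : Δ ∈ Set.Ioc (0:ℝ) 2) :
    (M - 1)^2 ≤
      sInf {e : ℝ | ∃ u : ℝ → ℝ, ContDiff ℝ 1 u ∧
          u (-1) = 3*M ∧ u 1 = 3*M ∧
          (∃ x₀ ∈ Set.Icc (-1:ℝ) 1, 4*M - 1 ≤ u x₀) ∧
          e = ∫ x in (-1:ℝ)..1, ((1/2) * (deriv u x)^2 + (Δ^2/4) * V (u x))} -
      sInf {e : ℝ | ∃ u : ℝ → ℝ, ContDiff ℝ 1 u ∧
          u (-1) = 3*M ∧ u 1 = 3*M ∧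
          e = ∫ x in (-1:ℝ)..1, ((1/2) * (deriv u x)^2 + (Δ^2/4) * V (u x))} := by
  obtain ⟨hΔ0, hΔ2⟩ := hΔ
  have hM1 : (0:ℝ) ≤ M - 1 := by linarith
  set c : ℝ := Δ^2/4 with hc
  have hc0 : 0 < c := by positivity
  set K : ℝ := V (3*M) with hKdef
  have hK0 : 0 ≤ K := hV0 _
  set S := {e : ℝ | ∃ u : ℝ → ℝ, ContDiff ℝ 1 u ∧
          u (-1) = 3*M ∧ u 1 = 3*M ∧
          e = ∫ x in (-1:ℝ)..1, ((1/2) * (deriv u x)^2 + c * V (u x))} with hS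
  set T := {e : ℝ | ∃ u : ℝ → ℝ, ContDiff ℝ 1 u ∧
          u (-1) = 3*M ∧ u 1 = 3*M ∧
          (∃ x₀ ∈ Set.Icc (-1:ℝ) 1, 4*M - 1 ≤ u x₀) ∧
          e = ∫ x in (-1:ℝ)..1, ((1/2) * (deriv u x)^2 + c * V (u x))} with hT
  have hTne : T.Nonempty := by
    refine ⟨_, fun x => 3*M + (M-1)*(1-x^2), ?_, by norm_num, by norm_num,
      ⟨0, by norm_num, by norm_num; linarith⟩, rfl⟩
    have : ContDiff ℝ 1 (fun x : ℝ => 3*M + (M-1)*(1-x^2)) := by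
      apply ContDiff.add contDiff_const
      apply ContDiff.mul contDiff_const
      apply ContDiff.sub contDiff_const
      exact contDiff_id.pow 2
    exact this
  have hSbd : BddBelow S := by
    refine ⟨0, fun e he => ?_⟩
    obtain ⟨u, hu, -, -, rfl⟩ := he
    apply intervalIntegral.integral_nonneg (by norm_num)
    intro x _
    have := hV0 (u x)
    have := sq_nonneg (deriv u x)
    positivity
  clear_value c K S T
  have key : ∀ e ∈ T, sInf S + (M-1)^2 ≤ e := by
    intro e he
    rw [hT] at he
    obtain ⟨u, hu, hub1, hub2, ⟨x₀, ⟨hx₀1, hx₀2⟩, hx₀v⟩, hedef⟩ := he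
    suffices hs : sInf S ≤ e - (M-1)^2 by linarith
    apply le_of_forall_pos_le_add
    intro δ hδ
    -- basic facts about u
    have hucont : Continuous u := hu.continuous
    have hu' : Continuous (deriv u) := hu.continuous_deriv le_rfl
    have hx3 : 3*M < u x₀ := by linarith
    -- the point a
    set A := Set.Icc (-1:ℝ) x₀ ∩ u ⁻¹' {3*M} with hA
    have hAne : A.Nonempty := ⟨-1, ⟨le_refl _, hx₀1⟩, hub1⟩
    have hAbdd : BddAbove A := ⟨x₀, fun x hx => hx.1.2⟩
    have hAcl : IsClosed A := isClosed_Icc.inter (isClosed_singleton.preimage hucont)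
    set a := sSup A with ha
    have haA : a ∈ A := hAcl.csSup_mem hAne hAbdd
    have hua : u a = 3*M := haA.2
    have ha1 : -1 ≤ a := haA.1.1
    have hax : a ≤ x₀ := haA.1.2
    have halt : a < x₀ := lt_of_le_of_ne hax (fun hq => by rw [hq] at hua; linarith)
    have huge1 : ∀ y ∈ Set.Icc a x₀, 3*M ≤ u y := by
      intro y hy
      by_contra hlt
      push_neg at hlt
      have hya : a < y := lt_of_le_of_ne hy.1 (fun hq => by rw [← hq] at hlt; linarith)
      have hmem : (3*M) ∈ Set.Icc (u y) (u x₀) := ⟨hlt.le, by linarith⟩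
      obtain ⟨z, hz, hz3⟩ := intermediate_value_Icc hy.2 hucont.continuousOn hmem
      have hzA : z ∈ A := ⟨⟨by linarith [hz.1], hz.2⟩, hz3⟩
      have : z ≤ a := le_csSup hAbdd hzA
      linarith [hz.1]
    -- the point b
    set B := Set.Icc x₀ (1:ℝ) ∩ u ⁻¹' {3*M} with hB
    have hBne : B.Nonempty := ⟨1, ⟨hx₀2, le_refl _⟩, hub2⟩
    have hBbdd : BddBelow B := ⟨x₀, fun x hx => hx.1.1⟩
    have hBcl : IsClosed B := isClosed_Icc.inter (isClosed_singleton.preimage hucont)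
    set b := sInf B with hb
    have hbB : b ∈ B := hBcl.csInf_mem hBne hBbdd
    have hub : u b = 3*M := hbB.2
    have hb1 : b ≤ 1 := hbB.1.2
    have hxb : x₀ ≤ b := hbB.1.1
    have hblt : x₀ < b := lt_of_le_of_ne hxb (fun hq => by rw [← hq] at hub; linarith)
    have huge2 : ∀ y ∈ Set.Icc x₀ b, 3*M ≤ u y := by
      intro y hy
      by_contra hlt
      push_neg at hlt
      have hyb : y < b := lt_of_le_of_ne hy.2 (fun hq => by rw [hq] at hlt; linarith)
      have hmem : (3*M) ∈ Set.Icc (u y) (u x₀) := ⟨hlt.le, by linarith⟩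
      obtain ⟨z, hz, hz3⟩ := intermediate_value_Icc' hy.1 hucont.continuousOn hmem
      have hzB : z ∈ B := ⟨⟨hz.1, by linarith [hz.2]⟩, hz3⟩
      have : b ≤ z := csInf_le hBbdd hzB
      linarith [hz.2]
    have hab : a < b := halt.trans hblt
    have huab : ∀ y ∈ Set.Icc a b, 3*M ≤ u y := by
      intro y hy
      rcases le_total y x₀ with hcase | hcase
      · exact huge1 y ⟨hy.1, hcase⟩
      · exact huge2 y ⟨hcase, hy.2⟩
    clear_value A B a b
    -- bounds L, B₀, C
    obtain ⟨L0, hL0⟩ := (isCompact_Icc (a := (-1:ℝ)) (b := 1)).exists_bound_of_continuousOn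
      hu'.continuousOn
    set L := max L0 0 with hLdef
    have hL : ∀ x ∈ Set.Icc (-1:ℝ) 1, |deriv u x| ≤ L := by
      intro x hx
      exact le_trans (by simpa using hL0 x hx) (le_max_left _ _)
    have hLnn : 0 ≤ L := le_max_right _ _
    obtain ⟨B1, hB1⟩ := (isCompact_Icc (a := (-1:ℝ)) (b := 1)).exists_bound_of_continuousOn
      hucont.continuousOn
    set B₀ := max B1 (3*M) with hB₀def
    have huB : ∀ x ∈ Set.Icc (-1:ℝ) 1, u x ≤ B₀ := by
      intro x hx
      have := hB1 x hx
      rw [Real.norm_eq_abs] at this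
      exact le_trans (le_trans (le_abs_self _) this) (le_max_left _ _)
    have h3MB : 3*M ≤ B₀ := le_max_right _ _
    obtain ⟨C0, hC0⟩ := (isCompact_Icc (a := 3*M) (b := B₀)).exists_bound_of_continuousOn
      hVc.continuousOn
    set C := max C0 0 with hCdef
    have hCnn : 0 ≤ C := le_max_right _ _
    have hCb : ∀ y ∈ Set.Icc (3*M) B₀, V y ≤ C := by
      intro y hy
      exact le_trans (le_trans (le_abs_self _) (by simpa using hC0 y hy)) (le_max_left _ _)
    have hKC : K ≤ C := by rw [hKdef]; exact hCb (3*M) ⟨le_refl _, h3MB⟩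
    clear_value L B₀ C
    -- choice of h
    set D := 9*L^2 + 2*c*C with hDdef
    have hD0 : 0 ≤ D := by
      rw [hDdef]
      have h1 : (0:ℝ) ≤ 9*L^2 := by positivity
      have h2 : 0 ≤ 2*c*C := by positivity
      linarith
    set h := min ((b-a)/4) (δ/(D+1)) with hhdef
    have hh0 : 0 < h := lt_min (by linarith) (div_pos hδ (by linarith))
    have h4h : 4*h ≤ b - a := by
      have := min_le_left ((b-a)/4) (δ/(D+1))
      rw [← hhdef] at this
      linarith
    have hDh : D*h ≤ δ := by
      have h5 : h ≤ δ/(D+1) := by rw [hhdef]; exact min_le_right _ _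
      have h6 : D*h ≤ D*(δ/(D+1)) := mul_le_mul_of_nonneg_left h5 hD0
      have h7 : D*(δ/(D+1)) ≤ δ := by
        rw [mul_div_assoc'] 
        rw [div_le_iff₀ (by linarith : (0:ℝ) < D + 1)]
        nlinarith only [hδ.le, hD0]
      exact h6.trans h7
    clear_value D h
    have hhne : h ≠ 0 := ne_of_gt hh0
    -- the modified function
    set χ : ℝ → ℝ := fun x => phi ((x-a)/h) + phi ((b-x)/h) with hχdef
    set χ' : ℝ → ℝ := fun x => phi' ((x-a)/h) * (1/h) + phi' ((b-x)/h) * (-1/h) with hχ'def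
    set w : ℝ → ℝ := fun x => 3*M + (u x - 3*M) * χ x with hwdef
    set w' : ℝ → ℝ := fun x => deriv u x * χ x + (u x - 3*M) * χ' x with hw'def
    clear_value χ χ' w w'
    have hχd : ∀ x, HasDerivAt χ (χ' x) x := by
      intro x
      simp only [hχdef, hχ'def]
      have h1 : HasDerivAt (fun x : ℝ => (x-a)/h) (1/h) x := by
        simpa using ((hasDerivAt_id x).sub_const a).div_const h
      have h2 : HasDerivAt (fun x : ℝ => (b-x)/h) (-1/h) x := by
        have := ((hasDerivAt_const x b).sub (hasDerivAt_id x)).div_const h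
        simpa using this
      exact ((hasDerivAt_phi _).comp x h1).add ((hasDerivAt_phi _).comp x h2)
    have hwd : ∀ x, HasDerivAt w (w' x) x := by
      intro x
      have hud : HasDerivAt u (deriv u x) x :=
        ((hu.differentiable one_ne_zero) x).hasDerivAt
      have hd2 := ((hud.sub_const (3*M)).mul (hχd x)).const_add (3*M)
      simp only [hwdef, hw'def]
      exact hd2
    have hderivw : ∀ x, deriv w x = w' x := fun x => (hwd x).deriv
    have hχcont : Continuous χ := by
      rw [hχdef]
      apply Continuous.add
      · exact continuous_phi.comp ((continuous_id.sub continuous_const).div_const h)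
      · exact continuous_phi.comp ((continuous_const.sub continuous_id).div_const h)
    have hχ'cont : Continuous χ' := by
      rw [hχ'def]
      apply Continuous.add
      · exact (continuous_phi'.comp ((continuous_id.sub continuous_const).div_const h)).mul
          continuous_const
      · exact (continuous_phi'.comp ((continuous_const.sub continuous_id).div_const h)).mul
          continuous_const
    have hw'cont : Continuous w' := by
      rw [hw'def]
      apply Continuous.add
      · exact hu'.mul hχcont
      · exact (hucont.sub continuous_const).mul hχ'cont
    have hwC1 : ContDiff ℝ 1 w := by
      rw [contDiff_one_iff_deriv]
      refine ⟨fun x => (hwd x).differentiableAt, ?_⟩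
      have : deriv w = w' := funext hderivw
      rw [this]
      exact hw'cont
    have hwcont : Continuous w := hwC1.continuous
    -- region facts
    have hregL : ∀ x, x ≤ a → χ x = 1 ∧ χ' x = 0 := by
      intro x hx
      have e1 : (x-a)/h ≤ 0 := div_nonpos_of_nonpos_of_nonneg (by linarith) hh0.le
      have e2 : (1:ℝ) ≤ (b-x)/h := by
        rw [le_div_iff₀ hh0]
        linarith
      constructor
      · simp [hχdef, phi_eq_one e1, phi_eq_zero e2]
      · simp [hχ'def, phi'_eq_zero_left e1, phi'_eq_zero_right e2]
    have hregR : ∀ x, b ≤ x → χ x = 1 ∧ χ' x = 0 := by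
      intro x hx
      have e1 : (1:ℝ) ≤ (x-a)/h := by
        rw [le_div_iff₀ hh0]
        linarith
      have e2 : (b-x)/h ≤ 0 := div_nonpos_of_nonpos_of_nonneg (by linarith) hh0.le
      constructor
      · simp [hχdef, phi_eq_zero e1, phi_eq_one e2]
      · simp [hχ'def, phi'_eq_zero_right e1, phi'_eq_zero_left e2]
    have hregM : ∀ x, a + h ≤ x → x ≤ b - h → χ x = 0 ∧ χ' x = 0 := by
      intro x hx1 hx2
      have e1 : (1:ℝ) ≤ (x-a)/h := by rw [le_div_iff₀ hh0]; linarith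
      have e2 : (1:ℝ) ≤ (b-x)/h := by rw [le_div_iff₀ hh0]; linarith
      constructor
      · simp [hχdef, phi_eq_zero e1, phi_eq_zero e2]
      · simp [hχ'def, phi'_eq_zero_right e1, phi'_eq_zero_right e2]
    have hedgeL : ∀ x ∈ Set.Icc a (a+h), χ x = phi ((x-a)/h) ∧
        χ' x = phi' ((x-a)/h) * (1/h) := by
      intro x hx
      have e2 : (1:ℝ) ≤ (b-x)/h := by
        rw [le_div_iff₀ hh0]
        have := hx.2
        linarith
      constructor
      · simp [hχdef, phi_eq_zero e2]
      · simp [hχ'def, phi'_eq_zero_right e2]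
    have hedgeR : ∀ x ∈ Set.Icc (b-h) b, χ x = phi ((b-x)/h) ∧
        χ' x = phi' ((b-x)/h) * (-1/h) := by
      intro x hx
      have e1 : (1:ℝ) ≤ (x-a)/h := by
        rw [le_div_iff₀ hh0]
        have := hx.1
        linarith
      constructor
      · simp [hχdef, phi_eq_zero e1]
      · simp [hχ'def, phi'_eq_zero_right e1]
    have hwL : ∀ x, x ≤ a → w x = u x ∧ deriv w x = deriv u x := by
      intro x hx
      obtain ⟨e1, e2⟩ := hregL x hx
      constructor
      · simp [hwdef, e1]
      · rw [hderivw x]; simp [hw'def, e1, e2]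
    have hwR : ∀ x, b ≤ x → w x = u x ∧ deriv w x = deriv u x := by
      intro x hx
      obtain ⟨e1, e2⟩ := hregR x hx
      constructor
      · simp [hwdef, e1]
      · rw [hderivw x]; simp [hw'def, e1, e2]
    -- boundary values of w
    have hwb1 : w (-1) = 3*M := by rw [(hwL (-1) ha1).1, hub1]
    have hwb2 : w 1 = 3*M := by rw [(hwR 1 hb1).1, hub2]
    have hahb : a + h ≤ b - h := by linarith
    -- continuity of integrands
    have hFucont : Continuous (fun x => (1/2)*(deriv u x)^2 + c*V (u x)) :=
      (continuous_const.mul (hu'.pow 2)).add (continuous_const.mul (hVc.comp hucont))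
    have hFweq : (fun x => (1/2)*(deriv w x)^2 + c*V (w x))
        = fun x => (1/2)*(w' x)^2 + c*V (w x) := by
      funext x; rw [hderivw x]
    have hFwcont : Continuous (fun x => (1/2)*(deriv w x)^2 + c*V (w x)) := by
      rw [hFweq]
      exact (continuous_const.mul (hw'cont.pow 2)).add (continuous_const.mul (hVc.comp hwcont))
    -- pointwise bound on the edges
    have hFwle : ∀ x ∈ Set.Icc a b, |u x - 3*M| ≤ L * h → χ x ∈ Set.Icc (0:ℝ) 1 →
        |χ' x| ≤ 2/h → (1/2)*(deriv w x)^2 + c*V (w x) ≤ 9/2*L^2 + c*C := by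
      intro x hx hu3 hχx hχ'x
      have hxI : x ∈ Set.Icc (-1:ℝ) 1 := ⟨by linarith [hx.1], by linarith [hx.2]⟩
      have hu3M : 3*M ≤ u x := huab x hx
      have hw3 : 3*M ≤ w x := by
        simp only [hwdef]
        have := mul_nonneg (sub_nonneg.mpr hu3M) hχx.1
        linarith only [this]
      have hwB : w x ≤ B₀ := by
        have h1 : (u x - 3*M) * χ x ≤ u x - 3*M :=
          mul_le_of_le_one_right (sub_nonneg.mpr hu3M) hχx.2
        have h2 := huB x hxI
        simp only [hwdef]
        linarith only [h1, h2]
      have hVw : V (w x) ≤ C := hCb _ ⟨hw3, hwB⟩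
      have hdw : |deriv w x| ≤ 3*L := by
        rw [hderivw x]
        simp only [hw'def]
        have hux := hL x hxI
        have hχabs : |χ x| ≤ 1 := abs_le.mpr ⟨by linarith [hχx.1], hχx.2⟩
        have h1 : |deriv u x * χ x| ≤ L := by
          rw [abs_mul]
          calc |deriv u x| * |χ x| ≤ L * 1 :=
              mul_le_mul hux hχabs (abs_nonneg _) hLnn
            _ = L := mul_one L
        have h2 : |(u x - 3*M) * χ' x| ≤ 2*L := by
          rw [abs_mul]
          calc |u x - 3*M| * |χ' x| ≤ (L*h) * (2/h) :=
                mul_le_mul hu3 hχ'x (abs_nonneg _) (mul_nonneg hLnn hh0.le)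
            _ = 2*L := by field_simp
        calc |deriv u x * χ x + (u x - 3*M) * χ' x|
            ≤ |deriv u x * χ x| + |(u x - 3*M) * χ' x| := abs_add_le _ _
          _ ≤ 3*L := by linarith
      have hdw2 : (deriv w x)^2 ≤ 9*L^2 := by
        calc (deriv w x)^2 ≤ (3*L)^2 :=
            sq_le_sq' (neg_le_of_abs_le hdw) (le_of_abs_le hdw)
          _ = 9*L^2 := by ring
      have hcV := mul_le_mul_of_nonneg_left hVw hc0.le
      linarith only [hdw2, hcV]
    -- left edge integral bound
    have hIedgeL : ∫ x in a..(a+h), ((1/2)*(deriv w x)^2 + c*V (w x)) ≤ (9/2*L^2 + c*C) * h := by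
      have hmono := intervalIntegral.integral_mono_on (μ := volume) (by linarith : a ≤ a+h)
        (hFwcont.intervalIntegrable _ _)
        ((continuous_const (y := 9/2*L^2 + c*C)).intervalIntegrable _ _) ?_
      · rw [intervalIntegral.integral_const] at hmono
        calc ∫ x in a..(a+h), ((1/2)*(deriv w x)^2 + c*V (w x))
            ≤ (a + h - a) • (9/2*L^2 + c*C) := hmono
          _ = (9/2*L^2 + c*C) * h := by rw [smul_eq_mul]; ring
      · intro x hx
        have hxab : x ∈ Set.Icc a b := ⟨hx.1, by linarith [hx.2]⟩
        apply hFwle x hxab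
        · have hfs : u x - 3*M = ∫ y in a..x, deriv u y := by
            rw [ftc_c1 hu a x, hua]
          rw [hfs]
          have hnb : ∀ y ∈ Set.uIoc a x, ‖deriv u y‖ ≤ L := by
            intro y hy
            rw [Set.uIoc_of_le hx.1] at hy
            exact hL y ⟨by linarith [hy.1.le], by linarith [hy.2, hx.2]⟩
          have hni := intervalIntegral.norm_integral_le_of_norm_le_const hnb
          rw [Real.norm_eq_abs] at hni
          have hxa : |x - a| ≤ h := by
            rw [abs_of_nonneg (by linarith [hx.1])]
            linarith [hx.2]
          calc |∫ y in a..x, deriv u y| ≤ L * |x - a| := hni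
            _ ≤ L * h := mul_le_mul_of_nonneg_left hxa hLnn
        · rw [(hedgeL x hx).1]; exact phi_mem _
        · rw [(hedgeL x hx).2, abs_mul]
          have := abs_phi'_le ((x-a)/h)
          have h1h : |1/h| = 1/h := abs_of_pos (by exact one_div_pos.mpr hh0)
          rw [h1h]
          calc |phi' ((x-a)/h)| * (1/h) ≤ 2 * (1/h) :=
            mul_le_mul_of_nonneg_right this (one_div_nonneg.mpr hh0.le)
            _ = 2/h := by ring
    -- right edge integral bound
    have hIedgeR : ∫ x in (b-h)..b, ((1/2)*(deriv w x)^2 + c*V (w x)) ≤ (9/2*L^2 + c*C) * h := by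
      have hmono := intervalIntegral.integral_mono_on (μ := volume) (by linarith : b-h ≤ b)
        (hFwcont.intervalIntegrable _ _)
        ((continuous_const (y := 9/2*L^2 + c*C)).intervalIntegrable _ _) ?_
      · rw [intervalIntegral.integral_const] at hmono
        calc ∫ x in (b-h)..b, ((1/2)*(deriv w x)^2 + c*V (w x))
            ≤ (b - (b-h)) • (9/2*L^2 + c*C) := hmono
          _ = (9/2*L^2 + c*C) * h := by rw [smul_eq_mul]; ring
      · intro x hx
        have hxab : x ∈ Set.Icc a b := ⟨by linarith [hx.1], hx.2⟩
        apply hFwle x hxab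
        · have hfs : u x - 3*M = -∫ y in x..b, deriv u y := by
            rw [ftc_c1 hu x b, hub]
            ring
          rw [hfs, abs_neg]
          have hnb : ∀ y ∈ Set.uIoc x b, ‖deriv u y‖ ≤ L := by
            intro y hy
            rw [Set.uIoc_of_le hx.2] at hy
            exact hL y ⟨by linarith [hy.1.le, hx.1], by linarith [hy.2]⟩
          have hni := intervalIntegral.norm_integral_le_of_norm_le_const hnb
          rw [Real.norm_eq_abs] at hni
          have hxa : |b - x| ≤ h := by
            rw [abs_of_nonneg (by linarith [hx.2])]
            linarith [hx.1]
          calc |∫ y in x..b, deriv u y| ≤ L * |b - x| := hni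
            _ ≤ L * h := mul_le_mul_of_nonneg_left hxa hLnn
        · rw [(hedgeR x hx).1]; exact phi_mem _
        · rw [(hedgeR x hx).2, abs_mul]
          have := abs_phi'_le ((b-x)/h)
          have h1h : |(-1:ℝ)/h| = 1/h := by
            rw [abs_div, abs_neg, abs_one, abs_of_pos hh0]
          rw [h1h]
          calc |phi' ((b-x)/h)| * (1/h) ≤ 2 * (1/h) :=
            mul_le_mul_of_nonneg_right this (one_div_nonneg.mpr hh0.le)
            _ = 2/h := by ring
    -- middle integral
    have hImid : ∫ x in (a+h)..(b-h), ((1/2)*(deriv w x)^2 + c*V (w x)) = c*K*(b - a - 2*h) := by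
      have hEq : Set.EqOn (fun x => (1/2)*(deriv w x)^2 + c*V (w x)) (fun _ => c*K)
          (Set.uIcc (a+h) (b-h)) := by
        intro x hx
        rw [Set.uIcc_of_le hahb] at hx
        obtain ⟨e1, e2⟩ := hregM x hx.1 hx.2
        have hwx : w x = 3*M := by simp [hwdef, e1]
        have hdwx : deriv w x = 0 := by rw [hderivw x]; simp [hw'def, e1, e2]
        simp only [hwx, hdwx, hKdef]
        norm_num
      rw [intervalIntegral.integral_congr hEq, intervalIntegral.integral_const, smul_eq_mul]
      ring
    -- kinetic lower bound
    have hJ1 : (M-1)^2 ≤ (x₀ - a) * ∫ x in a..x₀, (deriv u x)^2 := by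
      have hcs := cs_int hu' halt.le
      rw [ftc_c1 hu a x₀] at hcs
      have hX : M - 1 ≤ u x₀ - u a := by rw [hua]; linarith only [hx₀v, hM]
      nlinarith only [hcs, hX, hM1]
    have hJ2 : (M-1)^2 ≤ (b - x₀) * ∫ x in x₀..b, (deriv u x)^2 := by
      have hcs := cs_int hu' hblt.le
      rw [ftc_c1 hu x₀ b] at hcs
      have hX : M - 1 ≤ -(u b - u x₀) := by rw [hub]; linarith only [hx₀v, hM]
      nlinarith only [hcs, hX, hM1]
    have hJ1nn : 0 ≤ ∫ x in a..x₀, (deriv u x)^2 :=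
      intervalIntegral.integral_nonneg halt.le (fun x _ => sq_nonneg _)
    have hJ2nn : 0 ≤ ∫ x in x₀..b, (deriv u x)^2 :=
      intervalIntegral.integral_nonneg hblt.le (fun x _ => sq_nonneg _)
    have hkin : (M-1)^2 ≤ ∫ x in a..b, (1/2)*(deriv u x)^2 := by
      have hadd : (∫ x in a..x₀, (deriv u x)^2) + ∫ x in x₀..b, (deriv u x)^2
          = ∫ x in a..b, (deriv u x)^2 :=
        intervalIntegral.integral_add_adjacent_intervals
          ((hu'.pow 2).intervalIntegrable _ _) ((hu'.pow 2).intervalIntegrable _ _)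
      have hhalf : ∫ x in a..b, (1/2)*(deriv u x)^2 = (1/2) * ∫ x in a..b, (deriv u x)^2 :=
        intervalIntegral.integral_const_mul _ _
      set s := x₀ - a with hs
      set t := b - x₀ with ht
      have hs0 : 0 < s := by simp [hs]; linarith
      have ht0 : 0 < t := by simp [ht]; linarith
      have hst : s + t ≤ 2 := by simp [hs, ht]; linarith
      have hst2 : 2*s*t ≤ s + t := by
        have f1 : 0 ≤ (s-t)^2 := sq_nonneg _
        have f2 : 0 ≤ (s+t) * (2 - (s+t)) :=
          mul_nonneg (by linarith only [hs0, ht0]) (by linarith only [hst])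
        nlinarith only [f1, f2]
      rw [hhalf, ← hadd]
      set J₁ := ∫ x in a..x₀, (deriv u x)^2
      set J₂ := ∫ x in x₀..b, (deriv u x)^2
      have hA1 := mul_le_mul_of_nonneg_left hJ1 ht0.le
      have hA2 := mul_le_mul_of_nonneg_left hJ2 hs0.le
      have hA3 : 0 ≤ (M-1)^2 * (s + t - 2*s*t) :=
        mul_nonneg (sq_nonneg _) (by linarith only [hst2])
      have hA4 : 0 < s*t := mul_pos hs0 ht0
      nlinarith only [hA1, hA2, hA3, hA4, hJ1nn, hJ2nn]
    -- potential lower bound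
    have hpot : c*K*(b-a) ≤ ∫ x in a..b, c*V (u x) := by
      have hmono := intervalIntegral.integral_mono_on (μ := volume) hab.le
        ((continuous_const (y := c*K)).intervalIntegrable a b)
        ((continuous_const.mul (hVc.comp hucont)).intervalIntegrable a b)
        (fun x hx => mul_le_mul_of_nonneg_left (hVM _ (huab x hx)) hc0.le)
      rw [intervalIntegral.integral_const, smul_eq_mul] at hmono
      calc c*K*(b-a) = (b-a)*(c*K) := by ring
        _ ≤ _ := hmono
    -- lower bound for u-energy on [a,b]
    have hFuadd : ∫ x in a..b, ((1/2)*(deriv u x)^2 + c*V (u x))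
        = (∫ x in a..b, (1/2)*(deriv u x)^2) + ∫ x in a..b, c*V (u x) :=
      intervalIntegral.integral_add
        ((continuous_const.mul (hu'.pow 2)).intervalIntegrable a b)
        ((continuous_const.mul (hVc.comp hucont)).intervalIntegrable a b)
    have hFuab : (M-1)^2 + c*K*(b-a) ≤ ∫ x in a..b, ((1/2)*(deriv u x)^2 + c*V (u x)) := by
      rw [hFuadd]
      linarith only [hkin, hpot]
    -- upper bound for w-energy on [a,b]
    have hsplitw : (∫ x in a..(a+h), ((1/2)*(deriv w x)^2 + c*V (w x)))
        + (∫ x in (a+h)..(b-h), ((1/2)*(deriv w x)^2 + c*V (w x)))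
        + (∫ x in (b-h)..b, ((1/2)*(deriv w x)^2 + c*V (w x)))
        = ∫ x in a..b, ((1/2)*(deriv w x)^2 + c*V (w x)) := by
      rw [intervalIntegral.integral_add_adjacent_intervals
        (hFwcont.intervalIntegrable _ _) (hFwcont.intervalIntegrable _ _),
        intervalIntegral.integral_add_adjacent_intervals
        (hFwcont.intervalIntegrable _ _) (hFwcont.intervalIntegrable _ _)]
    have hFwab : ∫ x in a..b, ((1/2)*(deriv w x)^2 + c*V (w x)) ≤ c*K*(b-a) + D*h := by
      rw [← hsplitw, hImid]
      have hDid : D*h = 9*L^2*h + 2*(c*C)*h := by rw [hDdef]; ring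
      have hcKh : 0 ≤ c*K*h := mul_nonneg (mul_nonneg hc0.le hK0) hh0.le
      linarith only [hIedgeL, hIedgeR, hcKh, hDid]
    -- splitting the full integrals
    have hsplituFull : (∫ x in (-1:ℝ)..a, ((1/2)*(deriv u x)^2 + c*V (u x)))
        + (∫ x in a..b, ((1/2)*(deriv u x)^2 + c*V (u x)))
        + (∫ x in b..(1:ℝ), ((1/2)*(deriv u x)^2 + c*V (u x)))
        = ∫ x in (-1:ℝ)..1, ((1/2)*(deriv u x)^2 + c*V (u x)) := by
      rw [intervalIntegral.integral_add_adjacent_intervals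
        (hFucont.intervalIntegrable _ _) (hFucont.intervalIntegrable _ _),
        intervalIntegral.integral_add_adjacent_intervals
        (hFucont.intervalIntegrable _ _) (hFucont.intervalIntegrable _ _)]
    have hsplitwFull : (∫ x in (-1:ℝ)..a, ((1/2)*(deriv w x)^2 + c*V (w x)))
        + (∫ x in a..b, ((1/2)*(deriv w x)^2 + c*V (w x)))
        + (∫ x in b..(1:ℝ), ((1/2)*(deriv w x)^2 + c*V (w x)))
        = ∫ x in (-1:ℝ)..1, ((1/2)*(deriv w x)^2 + c*V (w x)) := by
      rw [intervalIntegral.integral_add_adjacent_intervals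
        (hFwcont.intervalIntegrable _ _) (hFwcont.intervalIntegrable _ _),
        intervalIntegral.integral_add_adjacent_intervals
        (hFwcont.intervalIntegrable _ _) (hFwcont.intervalIntegrable _ _)]
    have houtL : ∫ x in (-1:ℝ)..a, ((1/2)*(deriv w x)^2 + c*V (w x))
        = ∫ x in (-1:ℝ)..a, ((1/2)*(deriv u x)^2 + c*V (u x)) := by
      apply intervalIntegral.integral_congr
      intro x hx
      rw [Set.uIcc_of_le ha1] at hx
      obtain ⟨e1, e2⟩ := hwL x hx.2
      simp only [e1, e2]
    have houtR : ∫ x in b..(1:ℝ), ((1/2)*(deriv w x)^2 + c*V (w x))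
        = ∫ x in b..(1:ℝ), ((1/2)*(deriv u x)^2 + c*V (u x)) := by
      apply intervalIntegral.integral_congr
      intro x hx
      rw [Set.uIcc_of_le hb1] at hx
      obtain ⟨e1, e2⟩ := hwR x hx.1
      simp only [e1, e2]
    -- conclusion
    have hEw : ∫ x in (-1:ℝ)..1, ((1/2)*(deriv w x)^2 + c*V (w x)) ≤ e - (M-1)^2 + δ := by
      rw [← hsplitwFull, houtL, houtR, hedef, ← hsplituFull]
      linarith
    have hmem : (∫ x in (-1:ℝ)..1, ((1/2)*(deriv w x)^2 + c*V (w x))) ∈ S := by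
      rw [hS]
      exact ⟨w, hwC1, hwb1, hwb2, rfl⟩
    exact (csInf_le hSbd hmem).trans hEw
  have h1 : sInf S + (M-1)^2 ≤ sInf T := le_csInf hTne key
  linarith
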